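/- Let n ≥ 1, let a₁, …, aₙ ≥ 0 be real numbers with Σᵢ aᵢ > 0, and let x ≥ 0 satisfy aᵢ + x > 0 for every i. Then (1/n) Σᵢ aᵢ/(aᵢ + x)² ≥ (n / Σᵢ aᵢ) · (1 − √((1/n) Σᵢ (x/(aᵢ + x))²))². -/

import Mathlib

open Finset

theorem stmt1 (n : ℕ) (hn : 1 ≤ n) (a : Fin n → ℝ) (ha : ∀ i, 0 ≤ a i)
    (hsum : 0 < ∑ i, a i) (x : ℝ) (hx : 0 ≤ x) (hax : ∀ i, 0 < a i + x) :
    (1 / n : ℝ) * ∑ i, a i / (a i + x) ^ 2 ≥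
      ((n : ℝ) / ∑ i, a i) *
        (1 - Real.sqrt ((1 / n : ℝ) * ∑ i, (x / (a i + x)) ^ 2)) ^ 2 := by
  have hn' : (0:ℝ) < n := by exact_mod_cast hn
  set S := ∑ i, a i with hS
  set L := ∑ i, a i / (a i + x) ^ 2 with hL
  set C := ∑ i, (x / (a i + x)) ^ 2 with hC
  set Q := (1/n : ℝ) * C with hQdef
  set B := ∑ i, a i / (a i + x) with hB
  set T := ∑ i, x / (a i + x) with hT
  -- each x/(a i + x) ∈ [0,1]
  have hc0 : ∀ i, 0 ≤ x / (a i + x) := fun i => div_nonneg hx (hax i).le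
  have hc1 : ∀ i, x / (a i + x) ≤ 1 := fun i => by
    rw [div_le_one (hax i)]; linarith [ha i]
  have hC0 : 0 ≤ C := Finset.sum_nonneg fun i _ => sq_nonneg _
  have hCle : C ≤ n := by
    calc C ≤ ∑ _i : Fin n, (1:ℝ) :=
          Finset.sum_le_sum (fun i _ => by nlinarith [hc0 i, hc1 i])
      _ = n := by simp
  have hQ0 : 0 ≤ Q := by positivity
  have hQ1 : Q ≤ 1 := by
    rw [hQdef, one_div, inv_mul_le_iff₀ hn', mul_one]; exact hCle
  have hsq1 : Real.sqrt Q ≤ 1 := by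
    simpa using Real.sqrt_le_sqrt hQ1
  have hsq0 : 0 ≤ Real.sqrt Q := Real.sqrt_nonneg _
  -- Cauchy-Schwarz 2 : T^2 ≤ n * C
  have hT2 : T ^ 2 ≤ n * C := by
    have := sq_sum_le_card_mul_sum_sq (s := (univ : Finset (Fin n)))
      (f := fun i => x / (a i + x))
    simpa using this
  have hT0 : 0 ≤ T := Finset.sum_nonneg fun i _ => hc0 i
  -- T ≤ n * sqrt Q
  have hTle : T ≤ n * Real.sqrt Q := by
    have h1 : (n:ℝ) * Real.sqrt Q = Real.sqrt ((n:ℝ)^2 * Q) := by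
      rw [Real.sqrt_mul (sq_nonneg _), Real.sqrt_sq hn'.le]
    have h2 : (n:ℝ)^2 * Q = n * C := by
      rw [hQdef]; field_simp
    rw [h1, h2]
    calc T = Real.sqrt (T^2) := by rw [Real.sqrt_sq hT0]
      _ ≤ Real.sqrt (n * C) := Real.sqrt_le_sqrt hT2
  -- B = n - T
  have hBT : B = n - T := by
    have h : ∀ i : Fin n, a i / (a i + x) = 1 - x / (a i + x) := fun i => by
      have hne := (hax i).ne'
      field_simp
      ring
    have h2 : B = ∑ i : Fin n, (1 - x / (a i + x)) :=
      Finset.sum_congr rfl (fun i _ => h i)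
    rw [h2, Finset.sum_sub_distrib, ← hT]
    simp
  -- Cauchy-Schwarz 1 : B^2 ≤ S * L
  have hBL : B ^ 2 ≤ S * L := by
    have key := Finset.sum_mul_sq_le_sq_mul_sq (univ : Finset (Fin n))
      (fun i => Real.sqrt (a i)) (fun i => Real.sqrt (a i) / (a i + x))
    have e1 : ∀ i : Fin n, Real.sqrt (a i) * (Real.sqrt (a i) / (a i + x))
        = a i / (a i + x) := fun i => by
      rw [mul_div_assoc', Real.mul_self_sqrt (ha i)]
    have e2 : ∀ i : Fin n, Real.sqrt (a i) ^ 2 = a i := fun i =>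
      Real.sq_sqrt (ha i)
    have e3 : ∀ i : Fin n, (Real.sqrt (a i) / (a i + x)) ^ 2 = a i / (a i + x)^2 :=
      fun i => by rw [div_pow, Real.sq_sqrt (ha i)]
    simp_rw [e1, e2, e3] at key
    exact key
  -- combine: n*(1 - sqrt Q) ≤ B, both nonneg
  have hnB : (n:ℝ) * (1 - Real.sqrt Q) ≤ B := by
    rw [hBT]; nlinarith
  have hnB0 : 0 ≤ (n:ℝ) * (1 - Real.sqrt Q) := by nlinarith
  have key : (n:ℝ)^2 * (1 - Real.sqrt Q)^2 ≤ S * L := by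
    calc (n:ℝ)^2 * (1 - Real.sqrt Q)^2 = ((n:ℝ) * (1 - Real.sqrt Q))^2 := by ring
      _ ≤ B^2 := by nlinarith
      _ ≤ S * L := hBL
  rw [ge_iff_le, div_mul_eq_mul_div, div_le_iff₀ hsum]
  have h := mul_le_mul_of_nonneg_left key (by positivity : (0:ℝ) ≤ 1/n)
  calc (n:ℝ) * (1 - Real.sqrt Q)^2 = 1/n * ((n:ℝ)^2 * (1 - Real.sqrt Q)^2) := by
        field_simp
    _ ≤ 1/n * (S * L) := h
    _ = 1/n * L * S := by ring
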